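/- Let H be a complex Hilbert space and let U : ℝ → (H →L[ℂ] H) be a strongly continuous one-parameter unitary group: each U(t) is unitary, U(0) = 1, U(s + t) = U(s)·U(t) for all s, t ∈ ℝ, and for each x ∈ H the map t ↦ U(t)x is continuous. Define the unbounded operator A with domain D(A) = { x ∈ H : the map t ↦ U(t)x is differentiable at 0 } and A x = −i · (d/dt)|_{t=0} U(t)x. Then: (1) D(A) is dense in H; (2) A is self-adjoint, i.e. A equals its (unbounded) adjoint A†; and (3) for every t ∈ ℝ and x ∈ D(A), U(t)x ∈ D(A) and A(U(t)x) = U(t)(A x). -/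

import Mathlib

open scoped ComplexConjugate

local notation "⟪" x ", " y "⟫_ℂ" => @inner ℂ _ _ x y

/-- **Stone's theorem (Hilbert space version).** Let `U` be a strongly continuous
one-parameter unitary group on a complex Hilbert space `H`, and let `A` be the
unbounded operator with domain `{x | t ↦ U t x is differentiable at 0}` and
`A x = -i (d/dt)|₀ U t x` (equivalently, `(d/dt)|₀ U t x = i • A x`). Then `A` is
densely defined, self-adjoint, and commutes with the group. -/
theorem stone_theorem_generator
    (H : Type*) [NormedAddCommGroup H] [InnerProductSpace ℂ H] [CompleteSpace H]
    (U : ℝ → H →L[ℂ] H)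
    (hunitary : ∀ t : ℝ, U t ∈ unitary (H →L[ℂ] H))
    (hU0 : U 0 = 1)
    (hUadd : ∀ s t : ℝ, U (s + t) = U s * U t)
    (hcont : ∀ x : H, Continuous fun t : ℝ => U t x)
    (A : H →ₗ.[ℂ] H)
    (hdom : ∀ x : H, x ∈ A.domain ↔ ∃ d : H, HasDerivAt (fun t : ℝ => U t x) d 0)
    (hAval : ∀ x : A.domain, HasDerivAt (fun t : ℝ => U t (x : H)) (Complex.I • A x) 0) :
    Dense (A.domain : Set H) ∧ IsSelfAdjoint A ∧
      ∀ (t : ℝ) (x : A.domain),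
        ∃ hx : U t (x : H) ∈ A.domain, A ⟨U t (x : H), hx⟩ = U t (A x) := by
  have hUmul : ∀ (s t : ℝ) (x : H), U s (U t x) = U (s + t) x := by
    intro s t x; rw [hUadd]; rfl
  have hU1 : ∀ x : H, U 0 x = x := by intro x; rw [hU0]; rfl
  have hstar : ∀ t : ℝ, star (U t) = U (-t) := by
    intro t
    have h1 : U t * U (-t) = 1 := by rw [← hUadd]; simp [hU0]
    have h2 : star (U t) * U t = 1 := (Unitary.mem_iff.mp (hunitary t)).1
    calc star (U t) = star (U t) * (U t * U (-t)) := by rw [h1, mul_one]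
      _ = U (-t) := by rw [← mul_assoc, h2, one_mul]
  have hinner : ∀ (t : ℝ) (x y : H), ⟪U t x, y⟫_ℂ = ⟪x, U (-t) y⟫_ℂ := by
    intro t x y
    rw [← hstar t, ContinuousLinearMap.star_eq_adjoint,
      ContinuousLinearMap.adjoint_inner_right]
  -- derivative of the orbit at every time
  have hDeriv : ∀ (x : A.domain) (t : ℝ),
      HasDerivAt (fun s : ℝ => U s (x : H)) (Complex.I • U t (A x)) t := by
    intro x t
    have h0 : HasDerivAt (⇑(U t) ∘ fun h : ℝ => U h (x : H)) (U t (Complex.I • A x)) 0 :=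
      ((U t).restrictScalars ℝ).hasFDerivAt.comp_hasDerivAt 0 (hAval x)
    have hsub : HasDerivAt (fun s : ℝ => s - t) 1 t := (hasDerivAt_id t).sub_const t
    have htt : t - t = 0 := sub_self t
    have h2 : HasDerivAt ((⇑(U t) ∘ fun h : ℝ => U h (x : H)) ∘ fun s : ℝ => s - t)
        ((1 : ℝ) • U t (Complex.I • A x)) t :=
      HasDerivAt.scomp t (htt ▸ h0) hsub
    have h3 : ((⇑(U t) ∘ fun h : ℝ => U h (x : H)) ∘ fun s : ℝ => s - t)
        = fun s : ℝ => U s (x : H) := by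
      funext s
      show U t (U (s - t) (x : H)) = U s (x : H)
      rw [hUmul]
      congr 1
      ring_nf
    rw [h3] at h2
    simpa using h2
  -- commutation with the group
  have hcomm : ∀ (t : ℝ) (x : A.domain),
      ∃ hx : U t (x : H) ∈ A.domain, A ⟨U t (x : H), hx⟩ = U t (A x) := by
    intro t x
    have h1 : HasDerivAt (⇑(U t) ∘ fun s : ℝ => U s (x : H)) (U t (Complex.I • A x)) 0 :=
      ((U t).restrictScalars ℝ).hasFDerivAt.comp_hasDerivAt 0 (hAval x)
    have h2 : (⇑(U t) ∘ fun s : ℝ => U s (x : H)) = fun s : ℝ => U s (U t (x : H)) := by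
      funext s
      show U t (U s (x : H)) = U s (U t (x : H))
      rw [hUmul, hUmul, add_comm]
    rw [h2] at h1
    have h0 : HasDerivAt (fun s : ℝ => U s (U t (x : H))) (Complex.I • U t (A x)) 0 := by
      simpa using h1
    have hx : U t (x : H) ∈ A.domain := (hdom _).2 ⟨_, h0⟩
    refine ⟨hx, ?_⟩
    have h4 : Complex.I • A ⟨U t (x : H), hx⟩ = Complex.I • U t (A x) :=
      (hAval ⟨U t (x : H), hx⟩).unique h0
    exact smul_right_injective H Complex.I_ne_zero h4
  -- density
  have hdense : Dense (A.domain : Set H) := by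
    rw [Metric.dense_iff]
    intro x r hr
    have hcx := hcont x
    have h0 : ContinuousAt (fun s : ℝ => U s x) 0 := hcx.continuousAt
    rw [Metric.continuousAt_iff] at h0
    obtain ⟨δ, hδ, hδ'⟩ := h0 (r / 2) (by linarith)
    set c : ℝ := δ / 2 with hc
    have hc0 : 0 < c := by positivity
    set y : H := ((c : ℂ))⁻¹ • ∫ s in (0:ℝ)..c, U s x with hy
    have hGd : ∀ u : ℝ, HasDerivAt (fun v : ℝ => ∫ s in (0:ℝ)..v, U s x) (U u x) u := by
      intro u
      exact intervalIntegral.integral_hasDerivAt_right (hcx.intervalIntegrable 0 u)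
        (hcx.aestronglyMeasurable.stronglyMeasurableAtFilter) hcx.continuousAt
    -- the orbit of y
    have horb : ∀ t : ℝ, U t y
        = ((c : ℂ))⁻¹ • ((∫ s in (0:ℝ)..(t + c), U s x) - ∫ s in (0:ℝ)..t, U s x) := by
      intro t
      rw [hy, map_smul]
      congr 1
      have hint : IntervalIntegrable (fun s : ℝ => U s x) MeasureTheory.volume 0 c :=
        hcx.intervalIntegrable 0 c
      rw [← (U t).intervalIntegral_comp_comm hint]
      have : (∫ s in (0:ℝ)..c, U t (U s x)) = ∫ s in (0:ℝ)..c, U (t + s) x := by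
        apply intervalIntegral.integral_congr
        intro s _
        simp only [hUmul]
      rw [this, intervalIntegral.integral_comp_add_left (fun s => U s x) t, add_zero,
        intervalIntegral.integral_interval_sub_left
          (hcx.intervalIntegrable 0 (t + c)) (hcx.intervalIntegrable 0 t)]
    have hyd : HasDerivAt (fun t : ℝ => U t y)
        (((c : ℂ))⁻¹ • (U c x - U 0 x)) 0 := by
      have hplus : HasDerivAt (fun t : ℝ => ∫ s in (0:ℝ)..(t + c), U s x) (U c x) 0 := by
        have hadd : HasDerivAt (fun t : ℝ => t + c) 1 0 := (hasDerivAt_id 0).add_const c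
        have := HasDerivAt.scomp (0 : ℝ) (by simpa using hGd (0 + c)) hadd
        simpa [Function.comp_def] using this
      have hd := (hplus.sub (hGd 0)).const_smul ((c : ℂ))⁻¹
      exact hd.congr_of_eventuallyEq (Filter.Eventually.of_forall fun t => horb t)
    have hymem : y ∈ A.domain := (hdom y).2 ⟨_, hyd⟩
    refine ⟨y, ?_, hymem⟩
    rw [Metric.mem_ball, dist_eq_norm]
    have hx_int : (∫ _ in (0:ℝ)..c, x) = c • x := by simp
    have : y - x = ((c : ℂ))⁻¹ • ∫ s in (0:ℝ)..c, (U s x - x) := by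
      rw [hy, intervalIntegral.integral_sub (hcx.intervalIntegrable 0 c)
        (intervalIntegrable_const), hx_int, smul_sub]
      congr 1
      rw [← Complex.coe_smul, smul_smul,
        inv_mul_cancel₀ (by exact_mod_cast ne_of_gt hc0 : (c:ℂ) ≠ 0), one_smul]
    rw [this]
    have hbound : ‖∫ s in (0:ℝ)..c, (U s x - x)‖ ≤ (r / 2) * |c - 0| := by
      apply intervalIntegral.norm_integral_le_of_norm_le_const
      intro s hs
      rw [Set.uIoc_of_le (le_of_lt hc0)] at hs
      have hsd : dist s 0 < δ := by
        rw [Real.dist_eq, sub_zero, abs_of_pos hs.1]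
        calc s ≤ c := hs.2
          _ < δ := by rw [hc]; linarith
      have := hδ' hsd
      rw [dist_eq_norm, hU1] at this
      exact le_of_lt this
    rw [norm_smul]
    have : ‖((c:ℂ))⁻¹‖ = c⁻¹ := by
      rw [norm_inv, Complex.norm_real, Real.norm_of_nonneg (le_of_lt hc0)]
    rw [this]
    calc c⁻¹ * ‖∫ s in (0:ℝ)..c, (U s x - x)‖ ≤ c⁻¹ * ((r / 2) * |c - 0|) := by
          apply mul_le_mul_of_nonneg_left hbound (by positivity)
      _ = r / 2 := by
          rw [sub_zero, abs_of_pos hc0]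
          field_simp
      _ < r := by linarith
  -- symmetry
  have hsym : A.IsFormalAdjoint A := by
    intro x y
    have hconst : (fun t : ℝ => (⟪U t (x : H), U t (y : H)⟫_ℂ))
        = fun _ : ℝ => ⟪(x : H), (y : H)⟫_ℂ := by
      funext t
      rw [hinner, hUmul]
      norm_num [hU1]
    have hd : HasDerivAt (fun t : ℝ => (⟪U t (x : H), U t (y : H)⟫_ℂ))
        (⟪(x : H), Complex.I • A y⟫_ℂ + ⟪Complex.I • A x, (y : H)⟫_ℂ) 0 := by
      simpa only [hU1] using HasDerivAt.inner ℂ (hAval x) (hAval y)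
    rw [hconst] at hd
    have h0 : ⟪(x : H), Complex.I • A y⟫_ℂ + ⟪Complex.I • A x, (y : H)⟫_ℂ = 0 :=
      hd.unique (hasDerivAt_const 0 _)
    rw [inner_smul_right, inner_smul_left, Complex.conj_I] at h0
    have h1 : Complex.I * ⟪A x, (y : H)⟫_ℂ = Complex.I * ⟪(x : H), A y⟫_ℂ := by
      linear_combination -h0
    exact mul_left_cancel₀ Complex.I_ne_zero h1
  -- the adjoint is contained in A
  have hform := LinearPMap.adjoint_isFormalAdjoint hdense (T := A)
  have hkey : ∀ (y : H) (hy : y ∈ A.adjoint.domain),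
      ∃ hy' : y ∈ A.domain, A ⟨y, hy'⟩ = A.adjoint ⟨y, hy⟩ := by
    intro y hy
    set z : H := A.adjoint ⟨y, hy⟩ with hzdef
    have hzx : ∀ x : A.domain, ⟪A x, y⟫_ℂ = ⟪(x : H), z⟫_ℂ := by
      intro x
      have h1 : ⟪z, (x : H)⟫_ℂ = ⟪y, A x⟫_ℂ := hform ⟨y, hy⟩ x
      calc ⟪A x, y⟫_ℂ = conj (⟪y, A x⟫_ℂ) := (inner_conj_symm _ _).symm
        _ = conj (⟪z, (x : H)⟫_ℂ) := by rw [h1]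
        _ = ⟪(x : H), z⟫_ℂ := inner_conj_symm _ _
    have hder : ∀ (x : A.domain) (t : ℝ),
        HasDerivAt (fun t : ℝ => ⟪(x : H), U t y⟫_ℂ)
          (Complex.I * ⟪(x : H), U t z⟫_ℂ) t := by
      intro x t
      have hfun : (fun t : ℝ => ⟪(x : H), U t y⟫_ℂ)
          = fun t : ℝ => ⟪U (-t) (x : H), y⟫_ℂ := by
        funext t
        rw [hinner, neg_neg]
      -- derivative of t ↦ U (-t) x
      have hneg : HasDerivAt (fun t : ℝ => U (-t) (x : H))
          ((-1 : ℝ) • (Complex.I • U (-t) (A x))) t := by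
        have h1 : HasDerivAt (fun t : ℝ => -t) (-1 : ℝ) t := (hasDerivAt_id t).neg
        exact HasDerivAt.scomp t (hDeriv x (-t)) h1
      have hd2 := HasDerivAt.inner ℂ hneg (hasDerivAt_const t y)
      rw [hfun]
      refine hd2.congr_deriv ?_
      rw [inner_zero_right, zero_add]
      rw [neg_one_smul, inner_neg_left, inner_smul_left, Complex.conj_I]
      obtain ⟨hmem, heq⟩ := hcomm (-t) x
      have h3 : ⟪U (-t) (A x), y⟫_ℂ = ⟪U (-t) (x : H), z⟫_ℂ := by
        rw [← heq]
        exact hzx ⟨U (-t) (x : H), hmem⟩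
      rw [h3, hinner, neg_neg]
      ring_nf
    -- FTC: test against dense domain
    have hUby : ∀ b : ℝ, U b y = y + ∫ s in (0:ℝ)..b, Complex.I • U s z := by
      intro b
      have hintz : ∀ a b : ℝ,
          IntervalIntegrable (fun s : ℝ => Complex.I • U s z) MeasureTheory.volume a b :=
        fun a b => ((hcont z).const_smul _).intervalIntegrable a b
      apply hdense.eq_of_inner_right ℂ
      intro v0 hv0
      obtain ⟨v, rfl⟩ : ∃ v : A.domain, (v : H) = v0 := ⟨⟨v0, hv0⟩, rfl⟩
      have hFTC : (∫ s in (0:ℝ)..b, Complex.I * ⟪(v : H), U s z⟫_ℂ)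
          = ⟪(v : H), U b y⟫_ℂ - ⟪(v : H), U 0 y⟫_ℂ := by
        apply intervalIntegral.integral_eq_sub_of_hasDerivAt
        · intro s _
          exact hder v s
        · apply Continuous.intervalIntegrable
          exact continuous_const.mul (Continuous.inner continuous_const (hcont z))
      have hswap : (∫ s in (0:ℝ)..b, Complex.I * ⟪(v : H), U s z⟫_ℂ)
          = ⟪(v : H), ∫ s in (0:ℝ)..b, Complex.I • U s z⟫_ℂ := by
        have h1 : (fun s : ℝ => Complex.I * ⟪(v : H), U s z⟫_ℂ)
            = fun s : ℝ => innerSL ℂ (v : H) (Complex.I • U s z) := by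
          funext s
          simp [inner_smul_right]
        rw [h1, (innerSL ℂ (v : H)).intervalIntegral_comp_comm (hintz 0 b)]
        rfl
      rw [hswap, hU1] at hFTC
      rw [inner_add_right]
      linear_combination -hFTC
    -- differentiate at 0
    have hyd : HasDerivAt (fun b : ℝ => U b y) (Complex.I • z) 0 := by
      have hzc : Continuous fun s : ℝ => Complex.I • U s z := (hcont z).const_smul _
      have h1 : HasDerivAt (fun b : ℝ => y + ∫ s in (0:ℝ)..b, Complex.I • U s z)
          (Complex.I • U 0 z) 0 := by
        have h2 := intervalIntegral.integral_hasDerivAt_right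
          (hzc.intervalIntegrable 0 0)
          (hzc.aestronglyMeasurable.stronglyMeasurableAtFilter) hzc.continuousAt
        exact (h2.const_add y)
      rw [hU1] at h1
      refine HasDerivAt.congr_of_eventuallyEq h1 ?_
      filter_upwards with b using (hUby b)
    have hy' : y ∈ A.domain := (hdom y).2 ⟨_, hyd⟩
    refine ⟨hy', ?_⟩
    have h4 : Complex.I • A ⟨y, hy'⟩ = Complex.I • z := (hAval ⟨y, hy'⟩).unique hyd
    exact smul_right_injective H Complex.I_ne_zero h4
  -- assemble
  refine ⟨hdense, ?_, hcomm⟩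
  rw [LinearPMap.isSelfAdjoint_def]
  have hle1 : A ≤ A.adjoint := hsym.le_adjoint hdense
  have hle2 : A.adjoint ≤ A := by
    constructor
    · intro y hy
      exact (hkey y hy).1
    · intro u v huv
      obtain ⟨hm, heq⟩ := hkey (u : H) u.2
      have : A ⟨(u : H), hm⟩ = A v := by
        congr 1
        exact Subtype.ext huv
      rw [← this, heq]
  exact le_antisymm hle2 hle1
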